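/- Let R = k[H] and let C be the chain complex concentrated in homological degrees n, n+1, …, 0 (n < 0 even) with C_i = R for n ≤ i < 0 and C_0 = R², where the differential C_i → C_{i+1} is multiplication by H when i − n is odd, zero when i − n is even and i+1 < 0, and the map C_{−1} → C_0 is 1 ↦ (H, 1). Then the free part of the homology of C consists of exactly two copies of R, located in homological degrees n and 0. -/
import Mathlib


open Polynomial

/- STATEMENT 7: over R = k[H] (H = X), the complex concentrated in homological
degrees n, n+1, …, 0 (n < 0 even), with C_i = R for n ≤ i < 0, C_0 = R²,
differential C_i → C_{i+1} equal to ·H when i − n is odd, 0 when i − n is even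
(and i+1 < 0), and C_{−1} → C_0 given by 1 ↦ (H,1).  The free part of the
homology consists of exactly two copies of R, in homological degrees n
(the kernel of the zero differential d_n) and 0 (the cokernel of (H,1));
the homology in all intermediate degrees is H-torsion. -/
theorem stmt7 (k : Type) [Field k] (n : ℤ) (hn : n < 0) (hne : Even n)
    (d : ℤ → (Polynomial k →ₗ[Polynomial k] Polynomial k))
    (dlast : Polynomial k →ₗ[Polynomial k] Polynomial k × Polynomial k)
    (hd0 : ∀ i, n ≤ i → i + 1 < 0 → Even (i - n) → d i = 0)
    (hdH : ∀ i, n ≤ i → i + 1 < 0 → Odd (i - n) → ∀ p, d i p = X * p)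
    (hdlast : ∀ p : Polynomial k, dlast p = (X * p, p)) :
    -- a free tower in homological degree n
    Nonempty ((LinearMap.ker (d n)) ≃ₗ[Polynomial k] Polynomial k) ∧
    -- a free tower in homological degree 0
    Nonempty (((Polynomial k × Polynomial k) ⧸ LinearMap.range dlast)
      ≃ₗ[Polynomial k] Polynomial k) ∧
    -- homology in intermediate degrees n < j < −1 is H-torsion
    (∀ j, n < j → j < -1 →
      ∀ x : (LinearMap.ker (d j)) ⧸
        (Submodule.comap (LinearMap.ker (d j)).subtype (LinearMap.range (d (j - 1)))),
        ∃ N : ℕ, (X : Polynomial k) ^ N • x = 0) ∧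
    -- homology in degree −1 vanishes
    LinearMap.ker dlast = ⊥ := by
  have hn2 : n + 1 < 0 := by obtain ⟨r, hr⟩ := hne; omega
  refine ⟨?_, ?_, ?_, ?_⟩
  · -- degree n
    have hdn : d n = 0 := hd0 n le_rfl hn2 (by simp)
    have hker : LinearMap.ker (d n) = ⊤ := by rw [hdn]; exact LinearMap.ker_zero
    exact ⟨(LinearEquiv.ofEq _ _ hker).trans (Submodule.topEquiv)⟩
  · -- degree 0
    set f : Polynomial k × Polynomial k →ₗ[Polynomial k] Polynomial k :=
      LinearMap.fst (Polynomial k) (Polynomial k) (Polynomial k) -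
      (X : Polynomial k) • LinearMap.snd (Polynomial k) (Polynomial k) (Polynomial k) with hf
    have hfdef : ∀ ab : Polynomial k × Polynomial k, f ab = ab.1 - X * ab.2 := by
      intro ab; simp [hf, smul_eq_mul]
    have hsurj : Function.Surjective f := by
      intro a; exact ⟨(a, 0), by simp [hfdef]⟩
    have hkerf : LinearMap.range dlast = LinearMap.ker f := by
      ext ab
      simp only [LinearMap.mem_range, LinearMap.mem_ker, hfdef]
      constructor
      · rintro ⟨p, hp⟩
        rw [hdlast] at hp
        rw [← hp]; ring
      · intro h
        refine ⟨ab.2, ?_⟩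
        rw [hdlast]
        have : ab.1 = X * ab.2 := by linear_combination h
        exact Prod.ext (by rw [this]) rfl
    exact ⟨(Submodule.quotEquivOfEq _ _ hkerf).trans (f.quotKerEquivOfSurjective hsurj)⟩
  · -- intermediate degrees
    intro j hj1 hj2 x
    rcases Int.even_or_odd (j - n) with he | ho
    · -- d j = 0, d (j-1) = mult by X
      have hdj1 : ∀ p, d (j - 1) p = X * p := by
        refine hdH (j - 1) (by omega) (by omega) ?_
        obtain ⟨r, hr⟩ := he; exact ⟨r - 1, by omega⟩
      obtain ⟨⟨p, hp⟩, rfl⟩ := Submodule.Quotient.mk_surjective _ x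
      refine ⟨1, ?_⟩
      rw [← Submodule.Quotient.mk_smul, Submodule.Quotient.mk_eq_zero]
      simp only [Submodule.mem_comap, Submodule.coe_smul, Submodule.subtype_apply,
        LinearMap.mem_range]
      exact ⟨p, by rw [hdj1 p]; simp [smul_eq_mul]⟩
    · -- d j = mult by X, so kernel trivial
      have hdj : ∀ p, d j p = X * p := hdH j (by omega) (by omega) ho
      have : ∀ y : LinearMap.ker (d j), y = 0 := by
        rintro ⟨p, hp⟩
        have : X * p = 0 := by rw [← hdj p]; exact hp
        have hp0 : p = 0 := by
          rcases mul_eq_zero.mp this with h | h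
          · exact absurd h X_ne_zero
          · exact h
        exact Subtype.ext hp0
      obtain ⟨y, rfl⟩ := Submodule.Quotient.mk_surjective _ x
      exact ⟨0, by rw [this y]; simp⟩
  · -- degree -1
    ext p
    simp only [LinearMap.mem_ker, Submodule.mem_bot, hdlast, Prod.mk_eq_zero]
    constructor
    · rintro ⟨-, h⟩; exact h
    · rintro rfl; simp
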